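/- Let V^∨ be the variety in the language {+,*,0,1,∨} defined by the axioms of V_L together with identities stating that ∨ is a semilattice operation with 0∨1 = 0. Then there exists neither a positive first-order formula nor an existential first-order formula Φ(x,y,z,w) such that for all A, B ∈ V^∨, a,c ∈ A and b,d ∈ B: A×B ⊨ Φ(⟨a,b⟩,⟨c,d⟩,(0,1),(1,0)) if and only if a = c. -/

import Mathlib

open FirstOrder Language

universe u v w

namespace Paper

/-- The direct product of two `L`-structures, with pointwise operations. -/
instance prodStructure {L : FirstOrder.Language.{v, w}} (A : Type*) (B : Type*)
    [L.Structure A] [L.Structure B] : L.Structure (A × B) where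
  funMap f x := (Structure.funMap f fun i => (x i).1, Structure.funMap f fun i => (x i).2)
  RelMap r x := Structure.RelMap r (fun i => (x i).1) ∧ Structure.RelMap r fun i => (x i).2

/-- The interpretation of a closed term in an algebra. -/
def interp {L : FirstOrder.Language.{v, w}} (A : Type u) [L.Structure A]
    (t : L.Term Empty) : A := t.realize Empty.elim

/-- Positive formulas: built from atomic formulas using only `∧`, `∨`, `∃`, `∀`. -/
inductive IsPositive {L : FirstOrder.Language.{v, w}} {α : Type*} :
    ∀ {m : ℕ}, L.BoundedFormula α m → Prop
  | equal {m : ℕ} (t₁ t₂ : L.Term (α ⊕ Fin m)) : IsPositive (t₁.bdEqual t₂)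
  | rel {m k : ℕ} (R : L.Relations k) (ts : Fin k → L.Term (α ⊕ Fin m)) :
      IsPositive (BoundedFormula.rel R ts)
  | inf {m : ℕ} {φ ψ : L.BoundedFormula α m} :
      IsPositive φ → IsPositive ψ → IsPositive (φ ⊓ ψ)
  | sup {m : ℕ} {φ ψ : L.BoundedFormula α m} :
      IsPositive φ → IsPositive ψ → IsPositive (φ ⊔ ψ)
  | all {m : ℕ} {φ : L.BoundedFormula α (m + 1)} : IsPositive φ → IsPositive φ.all
  | ex {m : ℕ} {φ : L.BoundedFormula α (m + 1)} : IsPositive φ → IsPositive φ.ex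

/-- Existential formulas: `∃ x̄, ψ` with `ψ` quantifier-free. -/
def IsExistential {L : FirstOrder.Language.{v, w}} {α : Type*} (φ : L.Formula α) : Prop :=
  ∃ (m : ℕ) (ψ : L.BoundedFormula α m), ψ.IsQF ∧ φ = ψ.exs

/-- The function symbols `{+, *, 0, 1, ∨}` of the language of `V^∨`. -/
inductive LJFn : ℕ → Type
  | add : LJFn 2
  | mul : LJFn 2
  | join : LJFn 2
  | zero : LJFn 0
  | one : LJFn 0

/-- The language `{+, *, 0, 1, ∨}`. -/
def LJ : FirstOrder.Language := ⟨LJFn, fun _ => Empty⟩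

/-- The closed term `0`. -/
def zeroT {α : Type*} : LJ.Term α := Term.func LJFn.zero ![]

/-- The closed term `1`. -/
def oneT {α : Type*} : LJ.Term α := Term.func LJFn.one ![]

/-- `t + u`. -/
def addT {α : Type*} (t u : LJ.Term α) : LJ.Term α := Term.func LJFn.add ![t, u]

/-- `t * u`. -/
def mulT {α : Type*} (t u : LJ.Term α) : LJ.Term α := Term.func LJFn.mul ![t, u]

/-- `t ∨ u`. -/
def joinT {α : Type*} (t u : LJ.Term α) : LJ.Term α := Term.func LJFn.join ![t, u]

/-- The first bound variable, as a term. -/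
def xT {n : ℕ} (h : 0 < n) : LJ.Term (Empty ⊕ Fin n) := Term.var (Sum.inr ⟨0, h⟩)

/-- The second bound variable, as a term. -/
def yT {n : ℕ} (h : 1 < n) : LJ.Term (Empty ⊕ Fin n) := Term.var (Sum.inr ⟨1, h⟩)

/-- The third bound variable, as a term. -/
def wT {n : ℕ} (h : 2 < n) : LJ.Term (Empty ⊕ Fin n) := Term.var (Sum.inr ⟨2, h⟩)

/-- The theory of `V^∨`: the axioms `x + 0 = x`, `x + 1 = x * 1`, `x * 0 = 0` of
`V_L`, together with `∨` being a semilattice operation satisfying `0 ∨ 1 = 0`. -/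
def TJ : LJ.Theory :=
  {((addT (xT one_pos) zeroT).bdEqual (xT one_pos)).alls,
   ((addT (xT one_pos) oneT).bdEqual (mulT (xT one_pos) oneT)).alls,
   ((mulT (xT one_pos) zeroT).bdEqual zeroT).alls,
   ((joinT (xT one_pos) (xT one_pos)).bdEqual (xT one_pos)).alls,
   ((joinT (xT (by omega)) (yT (by omega))).bdEqual
      (joinT (yT (by omega : (1:ℕ) < 2)) (xT (by omega)))).alls,
   ((joinT (joinT (xT (by omega)) (yT (by omega))) (wT (by omega))).bdEqual
      (joinT (xT (by omega : (0:ℕ) < 3)) (joinT (yT (by omega)) (wT (by omega))))).alls,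
   ((joinT zeroT oneT).bdEqual (zeroT : LJ.Term (Empty ⊕ Fin 1))).alls}

end Paper


namespace VJProof

open Paper FirstOrder Language

/-- Helper to build an `LJ`-structure from operation tables and constants. -/
def mkS {α : Type} (pl mu jo : α → α → α) (z o : α) : LJ.Structure α where
  funMap {n} f := match f with
    | .add => fun x => pl (x 0) (x 1)
    | .mul => fun x => mu (x 0) (x 1)
    | .join => fun x => jo (x 0) (x 1)
    | .zero => fun _ => z
    | .one => fun _ => o
  RelMap {n} r := Empty.elim r

/-- The quotient algebra `Q` (three elements). -/
inductive Q3 : Type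
  | q0 | q1 | q2
deriving DecidableEq

instance : Fintype Q3 := ⟨{.q0, .q1, .q2}, fun x => by cases x <;> simp⟩

/-- The algebra `A`. -/
instance instA : LJ.Structure (Fin 2) :=
  mkS (fun x y => ![![0, 0], ![1, 0] ] x y) (fun _ _ => 0) (fun x y => ![![0, 0], ![0, 1] ] x y) 0 1

/-- The algebra `B`. -/
instance instB : LJ.Structure (Fin 3) :=
  mkS (fun x y => ![![0, 0, 0], ![1, 0, 0], ![2, 2, 2] ] x y)
    (fun x y => ![![0, 0, 0], ![0, 0, 0], ![0, 2, 0] ] x y)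
    (fun x y => ![![0, 0, 0], ![0, 1, 0], ![0, 0, 2] ] x y) 0 1

def qpl : Q3 → Q3 → Q3
  | x, .q0 => x
  | _, _ => .q0

def qjo : Q3 → Q3 → Q3
  | .q0, _ => .q0
  | _, .q0 => .q0
  | .q1, _ => .q1
  | _, y => y

/-- The algebra `Q`. -/
instance instQ : LJ.Structure Q3 := mkS qpl (fun _ _ => .q0) qjo .q0 .q1

/-- The trivial algebra. -/
instance instT : LJ.Structure Unit := mkS (fun _ _ => ()) (fun _ _ => ()) (fun _ _ => ()) () ()

/-- Realization of `LJ`-formulas without free variables is decidable over finite structures. -/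
def decRealize {M : Type} [LJ.Structure M] [DecidableEq M] [Fintype M] :
    ∀ {n : ℕ} (φ : LJ.BoundedFormula Empty n) (v : Empty → M) (xs : Fin n → M),
      Decidable (φ.Realize v xs)
  | _, .falsum, _, _ => isFalse fun h => h
  | _, .equal t₁ t₂, v, xs => decEq (t₁.realize (Sum.elim v xs)) (t₂.realize (Sum.elim v xs))
  | _, .rel R _, _, _ => Empty.elim R
  | _, .imp φ ψ, v, xs =>
    match decRealize φ v xs, decRealize ψ v xs with
    | _, isTrue hq => isTrue fun _ => hq
    | isFalse hp, _ => isTrue fun h => absurd h hp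
    | isTrue hp, isFalse hq => isFalse fun h => hq (h hp)
  | _, .all φ, v, xs =>
    letI : ∀ a : M, Decidable (φ.Realize v (Fin.snoc xs a)) :=
      fun a => decRealize φ v (Fin.snoc xs a)
    decidable_of_iff (∀ a : M, φ.Realize v (Fin.snoc xs a)) Iff.rfl

instance decSentenceRealize {M : Type} [LJ.Structure M] [DecidableEq M] [Fintype M]
    (φ : LJ.Sentence) : Decidable (M ⊨ φ) :=
  decRealize φ default default

theorem modA : (Fin 2) ⊨ Paper.TJ := by
  rw [Theory.model_iff]
  intro φ hφ
  simp only [Paper.TJ, Set.mem_insert_iff, Set.mem_singleton_iff] at hφ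
  rcases hφ with rfl | rfl | rfl | rfl | rfl | rfl | rfl <;> decide

theorem modB : (Fin 3) ⊨ Paper.TJ := by
  rw [Theory.model_iff]
  intro φ hφ
  simp only [Paper.TJ, Set.mem_insert_iff, Set.mem_singleton_iff] at hφ
  rcases hφ with rfl | rfl | rfl | rfl | rfl | rfl | rfl <;> decide

theorem modQ : Q3 ⊨ Paper.TJ := by
  rw [Theory.model_iff]
  intro φ hφ
  simp only [Paper.TJ, Set.mem_insert_iff, Set.mem_singleton_iff] at hφ
  rcases hφ with rfl | rfl | rfl | rfl | rfl | rfl | rfl <;> decide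

theorem modT : Unit ⊨ Paper.TJ := by
  rw [Theory.model_iff]
  intro φ hφ
  simp only [Paper.TJ, Set.mem_insert_iff, Set.mem_singleton_iff] at hφ
  rcases hφ with rfl | rfl | rfl | rfl | rfl | rfl | rfl <;> decide

/-- The quotient map. -/
def f1 : Fin 2 × Fin 3 → Q3 :=
  fun p => if p.1 = 0 then .q0 else if p.2 = 2 then .q2 else .q1

theorem gpos_add : ∀ p q : Fin 2 × Fin 3,
    ((f1 (Structure.funMap (L := LJ) LJFn.add ![p, q] : Fin 2 × Fin 3), ()) : Q3 × Unit) =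
      Structure.funMap (L := LJ) LJFn.add ![(f1 p, ()), (f1 q, ())] := by decide

theorem gpos_mul : ∀ p q : Fin 2 × Fin 3,
    ((f1 (Structure.funMap (L := LJ) LJFn.mul ![p, q] : Fin 2 × Fin 3), ()) : Q3 × Unit) =
      Structure.funMap (L := LJ) LJFn.mul ![(f1 p, ()), (f1 q, ())] := by decide

theorem gpos_join : ∀ p q : Fin 2 × Fin 3,
    ((f1 (Structure.funMap (L := LJ) LJFn.join ![p, q] : Fin 2 × Fin 3), ()) : Q3 × Unit) =
      Structure.funMap (L := LJ) LJFn.join ![(f1 p, ()), (f1 q, ())] := by decide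

/-- The surjective homomorphism `A × B → Q × T`. -/
def gpos : (Fin 2 × Fin 3) →[LJ] (Q3 × Unit) where
  toFun := fun p => (f1 p, ())
  map_fun' := fun {n} f x => by
    cases f with
    | add => exact gpos_add (x 0) (x 1)
    | mul => exact gpos_mul (x 0) (x 1)
    | join => exact gpos_join (x 0) (x 1)
    | zero => rfl
    | one => rfl
  map_rel' := fun {n} r _ => Empty.elim r

theorem gemb_add : ∀ p q : Fin 2 × Fin 3,
    ((f1 (Structure.funMap (L := LJ) LJFn.add ![p, q] : Fin 2 × Fin 3),
        (Structure.funMap (L := LJ) LJFn.add ![p, q] : Fin 2 × Fin 3).2) : Q3 × Fin 3) =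
      Structure.funMap (L := LJ) LJFn.add ![(f1 p, p.2), (f1 q, q.2)] := by decide

theorem gemb_mul : ∀ p q : Fin 2 × Fin 3,
    ((f1 (Structure.funMap (L := LJ) LJFn.mul ![p, q] : Fin 2 × Fin 3),
        (Structure.funMap (L := LJ) LJFn.mul ![p, q] : Fin 2 × Fin 3).2) : Q3 × Fin 3) =
      Structure.funMap (L := LJ) LJFn.mul ![(f1 p, p.2), (f1 q, q.2)] := by decide

theorem gemb_join : ∀ p q : Fin 2 × Fin 3,
    ((f1 (Structure.funMap (L := LJ) LJFn.join ![p, q] : Fin 2 × Fin 3),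
        (Structure.funMap (L := LJ) LJFn.join ![p, q] : Fin 2 × Fin 3).2) : Q3 × Fin 3) =
      Structure.funMap (L := LJ) LJFn.join ![(f1 p, p.2), (f1 q, q.2)] := by decide

/-- The embedding `A × B ↪ Q × B`. -/
def gemb : (Fin 2 × Fin 3) ↪[LJ] (Q3 × Fin 3) where
  toFun := fun p => (f1 p, p.2)
  inj' := by decide
  map_fun' := fun {n} f x => by
    cases f with
    | add => exact gemb_add (x 0) (x 1)
    | mul => exact gemb_mul (x 0) (x 1)
    | join => exact gemb_join (x 0) (x 1)
    | zero => rfl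
    | one => rfl
  map_rel' := fun {n} r _ => Empty.elim r

theorem gpos_surj : Function.Surjective gpos := by
  intro y
  rcases y with ⟨q, u⟩
  cases u
  cases q
  · exact ⟨(0, 0), rfl⟩
  · exact ⟨(1, 0), rfl⟩
  · exact ⟨(1, 2), rfl⟩

/-- Positive formulas are preserved by surjective homomorphisms. -/
theorem isPositive_realize_hom {L : FirstOrder.Language} {M N : Type*}
    [L.Structure M] [L.Structure N] (g : M →[L] N) (hg : Function.Surjective g)
    {α : Type*} {n : ℕ} {φ : L.BoundedFormula α n} (h : Paper.IsPositive φ) :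
    ∀ (v : α → M) (xs : Fin n → M), φ.Realize v xs → φ.Realize (g ∘ v) (g ∘ xs) := by
  induction h with
  | equal t₁ t₂ =>
    intro v xs hr
    rw [BoundedFormula.realize_bdEqual] at hr ⊢
    rw [← Sum.comp_elim, HomClass.realize_term, HomClass.realize_term, hr]
  | rel R ts =>
    intro v xs hr
    have h2 := g.map_rel R _ hr
    have he : (fun i => (ts i).realize (Sum.elim (⇑g ∘ v) (⇑g ∘ xs))) =
        ⇑g ∘ fun i => (ts i).realize (Sum.elim v xs) := by
      funext i
      rw [← Sum.comp_elim, HomClass.realize_term]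
      rfl
    show Structure.RelMap R fun i => (ts i).realize (Sum.elim (⇑g ∘ v) (⇑g ∘ xs))
    rw [he]
    exact h2
  | inf h1 h2 ih1 ih2 =>
    intro v xs hr
    rw [BoundedFormula.realize_inf] at hr ⊢
    exact ⟨ih1 v xs hr.1, ih2 v xs hr.2⟩
  | sup h1 h2 ih1 ih2 =>
    intro v xs hr
    rw [BoundedFormula.realize_sup] at hr ⊢
    exact hr.elim (fun h => Or.inl (ih1 v xs h)) fun h => Or.inr (ih2 v xs h)
  | all h ih =>
    intro v xs hr
    rw [BoundedFormula.realize_all] at hr ⊢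
    intro b
    obtain ⟨a, rfl⟩ := hg b
    have := ih v (Fin.snoc xs a) (hr a)
    rwa [Fin.comp_snoc] at this
  | ex h ih =>
    intro v xs hr
    rw [BoundedFormula.realize_ex] at hr ⊢
    obtain ⟨a, ha⟩ := hr
    exact ⟨g a, by rw [← Fin.comp_snoc]; exact ih v _ ha⟩

/-- Quantifier-free formulas transfer along embeddings. -/
theorem isQF_realize_embedding {L : FirstOrder.Language} {M N : Type*}
    [L.Structure M] [L.Structure N] (g : M ↪[L] N)
    {α : Type*} {n : ℕ} {φ : L.BoundedFormula α n} (h : φ.IsQF) :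
    ∀ (v : α → M) (xs : Fin n → M), φ.Realize (g ∘ v) (g ∘ xs) ↔ φ.Realize v xs := by
  induction h with
  | falsum => intro v xs; exact Iff.rfl
  | of_isAtomic h =>
    cases h with
    | equal t₁ t₂ =>
      intro v xs
      rw [BoundedFormula.realize_bdEqual, BoundedFormula.realize_bdEqual,
        ← Sum.comp_elim, HomClass.realize_term, HomClass.realize_term]
      exact g.injective.eq_iff
    | rel R ts =>
      intro v xs
      have he : (fun i => (ts i).realize (Sum.elim (⇑g ∘ v) (⇑g ∘ xs))) =
          ⇑g ∘ fun i => (ts i).realize (Sum.elim v xs) := by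
        funext i
        rw [← Sum.comp_elim, HomClass.realize_term]
        rfl
      show Structure.RelMap R (fun i => (ts i).realize (Sum.elim (⇑g ∘ v) (⇑g ∘ xs))) ↔ _
      rw [he]
      exact g.map_rel R _
  | imp h1 h2 ih1 ih2 =>
    intro v xs
    rw [BoundedFormula.realize_imp, BoundedFormula.realize_imp, ih1, ih2]

/-- Formula-level version of `isPositive_realize_hom`. -/
theorem isPositive_realize_hom_formula {L : FirstOrder.Language} {M N : Type*}
    [L.Structure M] [L.Structure N] (g : M →[L] N) (hg : Function.Surjective g)
    {α : Type*} {φ : L.Formula α} (h : Paper.IsPositive φ) (v : α → M)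
    (hr : φ.Realize v) : φ.Realize (⇑g ∘ v) := by
  unfold Formula.Realize at hr ⊢
  have h3 := isPositive_realize_hom g hg h v _ hr
  convert h3 using 2 <;> exact Subsingleton.elim _ _

end VJProof

/-- **Proposition 6.3.** In the variety `V^∨` there is neither a positive nor an
existential first-order formula `Φ(x, y, z, w)` such that for all `A, B ∈ V^∨`,
`a, c ∈ A`, `b, d ∈ B` : `A × B ⊨ Φ(⟨a,b⟩, ⟨c,d⟩, (0,1), (1,0))` iff `a = c`. -/
theorem no_positive_or_existential_DFC_witness_for_VJ :
    ¬∃ Φ : Paper.LJ.Formula (Fin 2 ⊕ (Fin 1 ⊕ Fin 1)),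
      (Paper.IsPositive Φ ∨ Paper.IsExistential Φ) ∧
      ∀ (A : Type) (B : Type) [Paper.LJ.Structure A] [Paper.LJ.Structure B],
        A ⊨ Paper.TJ → B ⊨ Paper.TJ → Nonempty A → Nonempty B →
          ∀ (a c : A) (b d : B),
            Φ.Realize (Sum.elim (![((a, b) : A × B), (c, d)])
              (Sum.elim (fun _ => ((Paper.interp A Paper.zeroT, Paper.interp B Paper.oneT) : A × B))
                fun _ => ((Paper.interp A Paper.oneT, Paper.interp B Paper.zeroT) : A × B))) ↔
            a = c := by
  rintro ⟨Φ, hkind, hΦ⟩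
  have hAB : Φ.Realize (Sum.elim (![(((1 : Fin 2), (0 : Fin 3)) : Fin 2 × Fin 3), (1, 2)])
      (Sum.elim (fun _ : Fin 1 => ((Paper.interp (Fin 2) Paper.zeroT,
          Paper.interp (Fin 3) Paper.oneT) : Fin 2 × Fin 3))
        fun _ : Fin 1 => (Paper.interp (Fin 2) Paper.oneT, Paper.interp (Fin 3) Paper.zeroT))) :=
    (hΦ (Fin 2) (Fin 3) VJProof.modA VJProof.modB ⟨0⟩ ⟨0⟩ 1 1 0 2).2 rfl
  have hdef : ∀ (N : Type) (y : Fin 0 → N), y = default := fun N y => funext fun x => x.elim0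
  rcases hkind with hpos | hex
  · -- positive case: push along the surjective homomorphism `gpos`.
    have h2 : Φ.Realize ((VJProof.gpos : Fin 2 × Fin 3 → VJProof.Q3 × Unit) ∘ (Sum.elim
        (![(((1 : Fin 2), (0 : Fin 3)) : Fin 2 × Fin 3), (1, 2)])
        (Sum.elim (fun _ : Fin 1 => ((Paper.interp (Fin 2) Paper.zeroT,
            Paper.interp (Fin 3) Paper.oneT) : Fin 2 × Fin 3))
          fun _ : Fin 1 => (Paper.interp (Fin 2) Paper.oneT, Paper.interp (Fin 3) Paper.zeroT)))) := by
      exact VJProof.isPositive_realize_hom_formula VJProof.gpos VJProof.gpos_surj hpos _ hAB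
    have hv : (VJProof.gpos : Fin 2 × Fin 3 → VJProof.Q3 × Unit) ∘ (Sum.elim
        (![(((1 : Fin 2), (0 : Fin 3)) : Fin 2 × Fin 3), (1, 2)])
        (Sum.elim (fun _ : Fin 1 => ((Paper.interp (Fin 2) Paper.zeroT,
            Paper.interp (Fin 3) Paper.oneT) : Fin 2 × Fin 3))
          fun _ : Fin 1 => (Paper.interp (Fin 2) Paper.oneT, Paper.interp (Fin 3) Paper.zeroT))) =
        Sum.elim (![(((.q1 : VJProof.Q3), ()) : VJProof.Q3 × Unit), (.q2, ())])
          (Sum.elim (fun _ : Fin 1 => ((Paper.interp VJProof.Q3 Paper.zeroT,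
              Paper.interp Unit Paper.oneT) : VJProof.Q3 × Unit))
            fun _ : Fin 1 => (Paper.interp VJProof.Q3 Paper.oneT, Paper.interp Unit Paper.zeroT)) := by
      funext x
      rcases x with i | j | j
      · fin_cases i <;> decide
      · fin_cases j <;> decide
      · fin_cases j <;> decide
    rw [hv] at h2
    have hfin : (VJProof.Q3.q1 : VJProof.Q3) = VJProof.Q3.q2 :=
      (hΦ VJProof.Q3 Unit VJProof.modQ VJProof.modT ⟨.q0⟩ ⟨()⟩ .q1 .q2 () ()).1 h2
    exact VJProof.Q3.noConfusion hfin
  · -- existential case: push along the embedding `gemb`.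
    obtain ⟨m, ψ, hqf, rfl⟩ := hex
    rw [BoundedFormula.realize_exs] at hAB
    obtain ⟨xs, hxs⟩ := hAB
    have h2 : ψ.exs.Realize ((VJProof.gemb : Fin 2 × Fin 3 → VJProof.Q3 × Fin 3) ∘ (Sum.elim
        (![(((1 : Fin 2), (0 : Fin 3)) : Fin 2 × Fin 3), (1, 2)])
        (Sum.elim (fun _ : Fin 1 => ((Paper.interp (Fin 2) Paper.zeroT,
            Paper.interp (Fin 3) Paper.oneT) : Fin 2 × Fin 3))
          fun _ : Fin 1 => (Paper.interp (Fin 2) Paper.oneT, Paper.interp (Fin 3) Paper.zeroT)))) := by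
      rw [BoundedFormula.realize_exs]
      exact ⟨(VJProof.gemb : Fin 2 × Fin 3 → VJProof.Q3 × Fin 3) ∘ xs,
        (VJProof.isQF_realize_embedding VJProof.gemb hqf _ xs).2 hxs⟩
    have hv : (VJProof.gemb : Fin 2 × Fin 3 → VJProof.Q3 × Fin 3) ∘ (Sum.elim
        (![(((1 : Fin 2), (0 : Fin 3)) : Fin 2 × Fin 3), (1, 2)])
        (Sum.elim (fun _ : Fin 1 => ((Paper.interp (Fin 2) Paper.zeroT,
            Paper.interp (Fin 3) Paper.oneT) : Fin 2 × Fin 3))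
          fun _ : Fin 1 => (Paper.interp (Fin 2) Paper.oneT, Paper.interp (Fin 3) Paper.zeroT))) =
        Sum.elim (![(((.q1 : VJProof.Q3), (0 : Fin 3)) : VJProof.Q3 × Fin 3), (.q2, 2)])
          (Sum.elim (fun _ : Fin 1 => ((Paper.interp VJProof.Q3 Paper.zeroT,
              Paper.interp (Fin 3) Paper.oneT) : VJProof.Q3 × Fin 3))
            fun _ : Fin 1 => (Paper.interp VJProof.Q3 Paper.oneT, Paper.interp (Fin 3) Paper.zeroT)) := by
      funext x
      rcases x with i | j | j
      · fin_cases i <;> decide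
      · fin_cases j <;> decide
      · fin_cases j <;> decide
    rw [hv] at h2
    have hfin : (VJProof.Q3.q1 : VJProof.Q3) = VJProof.Q3.q2 :=
      (hΦ VJProof.Q3 (Fin 3) VJProof.modQ VJProof.modB ⟨.q0⟩ ⟨0⟩ .q1 .q2 0 2).1 h2
    exact VJProof.Q3.noConfusion hfin
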